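/- Let α_T be partitioned as [[α_Ts, α_Tg],[1ᵀ−1ᵀα_Ts, 1−1ᵀα_Tg]] consistent with goal/non-goal blocks, and suppose the abstracted chain converges (V_p → 1ᵀ and T_{αs}^k → 0 as k → ∞). Then the limiting true goal-transition probability vector equals 1ᵀ − ‖α⁺_Tg‖·1ᵀ, and hence full convergence of the true system (limit equal to 1ᵀ) holds if and only if ‖α⁺_Tg‖ = 0. -/

import Mathlib

open Matrix Finset Filter Topology

section Stmt16

variable {m n : ℕ}

/-- The full abstraction matrix `α_T`, partitioned as
`[[α_Ts, α_Tg],[1ᵀ−1ᵀα_Ts, 1−1ᵀα_Tg]]` (bottom row chosen so that columns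
sum to 1). -/
noncomputable def alphaFull (αTs : Matrix (Fin m) (Fin n) ℝ)
    (αTg : Matrix (Fin m) (Fin 1) ℝ) :
    Matrix (Fin m ⊕ Fin 1) (Fin n ⊕ Fin 1) ℝ :=
  Matrix.fromBlocks αTs αTg
    (Matrix.of fun (_ : Fin 1) (j : Fin n) => 1 - ∑ i, αTs i j)
    (Matrix.of fun (_ : Fin 1) (_ : Fin 1) => 1 - ∑ i, αTg i 0)

/-- The full pseudoinverse matrix `α⁺_T`, partitioned analogously with blocks
`α⁺_Ts` and `α⁺_Tg`. -/
noncomputable def alphaPinvFull (αpTs : Matrix (Fin n) (Fin m) ℝ)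
    (αpTg : Matrix (Fin n) (Fin 1) ℝ) :
    Matrix (Fin n ⊕ Fin 1) (Fin m ⊕ Fin 1) ℝ :=
  Matrix.fromBlocks αpTs αpTg
    (Matrix.of fun (_ : Fin 1) (j : Fin m) => 1 - ∑ i, αpTs i j)
    (Matrix.of fun (_ : Fin 1) (_ : Fin 1) => 1 - ∑ i, αpTg i 0)

/-- The abstracted column-stochastic transition matrix with absorbing
abstracted goal, `P_α = [[T_αs, 0],[t_αg, 1]]`. -/
noncomputable def Palpha (Tαs : Matrix (Fin m) (Fin m) ℝ)
    (tαg : Matrix (Fin 1) (Fin m) ℝ) :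
    Matrix (Fin m ⊕ Fin 1) (Fin m ⊕ Fin 1) ℝ :=
  Matrix.fromBlocks Tαs (0 : Matrix (Fin m) (Fin 1) ℝ) tαg
    (1 : Matrix (Fin 1) (Fin 1) ℝ)

/-- The true goal-transition probability vector at step `k`, i.e. the
goal row of `P_g^k = α⁺_T P_α^k α_T` restricted to non-goal columns. -/
noncomputable def trueGoalVec (αTs : Matrix (Fin m) (Fin n) ℝ)
    (αTg : Matrix (Fin m) (Fin 1) ℝ) (αpTs : Matrix (Fin n) (Fin m) ℝ)
    (αpTg : Matrix (Fin n) (Fin 1) ℝ) (Tαs : Matrix (Fin m) (Fin m) ℝ)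
    (tαg : Matrix (Fin 1) (Fin m) ℝ) (k : ℕ) :
    Matrix (Fin 1) (Fin n) ℝ :=
  Matrix.of fun _ j =>
    (alphaPinvFull αpTs αpTg * (Palpha Tαs tαg) ^ k * alphaFull αTs αTg)
      (Sum.inr 0) (Sum.inl j)

lemma palpha_pow_blocks (Tαs : Matrix (Fin m) (Fin m) ℝ)
    (tαg : Matrix (Fin 1) (Fin m) ℝ) (k : ℕ) :
    ∃ C, (Palpha Tαs tαg) ^ k = Matrix.fromBlocks (Tαs ^ k) 0 C 1 := by
  induction k with
  | zero => exact ⟨0, by simp [Matrix.fromBlocks_one]⟩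
  | succ k ih =>
    obtain ⟨C, hC⟩ := ih
    refine ⟨C * Tαs + (1 : Matrix (Fin 1) (Fin 1) ℝ) * tαg, ?_⟩
    rw [pow_succ, hC, Palpha, Matrix.fromBlocks_multiply]
    simp [pow_succ]

lemma palpha_pow_eq (Tαs : Matrix (Fin m) (Fin m) ℝ)
    (tαg : Matrix (Fin 1) (Fin m) ℝ) (k : ℕ) :
    (Palpha Tαs tαg) ^ k = Matrix.fromBlocks (Tαs ^ k) 0
      (Matrix.of fun (_ : Fin 1) (j : Fin m) =>
        ((Palpha Tαs tαg) ^ k) (Sum.inr 0) (Sum.inl j)) 1 := by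
  obtain ⟨C, hC⟩ := palpha_pow_blocks Tαs tαg k
  have hCeq : (Matrix.of fun (_ : Fin 1) (j : Fin m) =>
      ((Palpha Tαs tαg) ^ k) (Sum.inr 0) (Sum.inl j)) = C := by
    ext i j
    rw [Subsingleton.elim i 0]
    simp [hC, Matrix.fromBlocks_apply₂₁]
  rw [hCeq, hC]

/-- with `P_g^k = α⁺_T P_α^k α_T`, if the abstracted chain
converges (`V_p → 1ᵀ` and `T_αs^k → 0`), then the true goal-transition
probability vector converges to `1ᵀ − ‖α⁺_Tg‖·1ᵀ` (where `‖α⁺_Tg‖ = 1ᵀα⁺_Tg`),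
and full convergence of the true system to `1ᵀ` holds iff `‖α⁺_Tg‖ = 0`. -/
theorem stmt16
    (αTs : Matrix (Fin m) (Fin n) ℝ) (αTg : Matrix (Fin m) (Fin 1) ℝ)
    (αpTs : Matrix (Fin n) (Fin m) ℝ) (αpTg : Matrix (Fin n) (Fin 1) ℝ)
    (Tαs : Matrix (Fin m) (Fin m) ℝ) (tαg : Matrix (Fin 1) (Fin m) ℝ)
    -- `α_T` is column stochastic
    (hαpos : ∀ i j, 0 ≤ (alphaFull αTs αTg) i j)
    -- the pseudoinverse is a left inverse of `α_T`
    (hpinv : alphaPinvFull αpTs αpTg * alphaFull αTs αTg = 1)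
    -- `P_α` is column stochastic
    (hPαpos : ∀ i j, 0 ≤ (Palpha Tαs tαg) i j)
    (hPαcol : ∀ j, (∑ i, (Palpha Tαs tαg) i j) = 1)
    -- convergence of the abstracted chain: `T_αs^k → 0` and `V_p → 1ᵀ`
    (hTconv : Tendsto (fun k : ℕ => Tαs ^ k) atTop (𝓝 0))
    (hVconv : Tendsto
      (fun k : ℕ => Matrix.of fun (_ : Fin 1) (j : Fin m) =>
        ((Palpha Tαs tαg) ^ k) (Sum.inr 0) (Sum.inl j))
      atTop (𝓝 (Matrix.of fun (_ : Fin 1) (_ : Fin m) => (1 : ℝ)))) :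
    Tendsto (fun k : ℕ => trueGoalVec αTs αTg αpTs αpTg Tαs tαg k) atTop
        (𝓝 (Matrix.of fun (_ : Fin 1) (_ : Fin n) =>
          (1 : ℝ) - ∑ i, αpTg i 0)) ∧
      (Tendsto (fun k : ℕ => trueGoalVec αTs αTg αpTs αpTg Tαs tαg k) atTop
          (𝓝 (Matrix.of fun (_ : Fin 1) (_ : Fin n) => (1 : ℝ))) ↔
        (∑ i, αpTg i 0) = 0) := by
  set s : ℝ := ∑ i, αpTg i 0 with hs
  set bl : Matrix (Fin 1) (Fin m) ℝ :=
    Matrix.of fun _ j => 1 - ∑ i, αpTs i j with hbl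
  set br : Matrix (Fin 1) (Fin 1) ℝ := Matrix.of fun _ _ => 1 - s with hbr
  set bl2 : Matrix (Fin 1) (Fin n) ℝ :=
    Matrix.of fun _ j => 1 - ∑ i, αTs i j with hbl2
  set Vk : ℕ → Matrix (Fin 1) (Fin m) ℝ := fun k =>
    Matrix.of fun (_ : Fin 1) (j : Fin m) =>
      ((Palpha Tαs tαg) ^ k) (Sum.inr 0) (Sum.inl j) with hVk
  have hfact : ∀ k, trueGoalVec αTs αTg αpTs αpTg Tαs tαg k
      = bl * (Tαs ^ k) * αTs + br * (Vk k) * αTs + br * bl2 := by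
    intro k
    ext u j
    rw [Subsingleton.elim u 0]
    simp only [trueGoalVec, Matrix.of_apply]
    rw [palpha_pow_eq, alphaPinvFull, alphaFull, Matrix.fromBlocks_multiply,
      Matrix.fromBlocks_multiply, Matrix.fromBlocks_apply₂₁]
    simp only [Matrix.add_apply, Matrix.mul_apply, Matrix.of_apply, hbl, hbr,
      hbl2, hVk, hs, Matrix.add_mul, Matrix.mul_one, Matrix.mul_zero,
      Matrix.zero_mul, Matrix.one_mul, add_zero, zero_add]
  have hlimA : Tendsto (fun k : ℕ => bl * (Tαs ^ k) * αTs) atTop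
      (𝓝 (bl * (0 : Matrix (Fin m) (Fin m) ℝ) * αTs)) := by
    have hc : Continuous fun M : Matrix (Fin m) (Fin m) ℝ => bl * M * αTs :=
      (continuous_const.matrix_mul continuous_id).matrix_mul continuous_const
    exact (hc.tendsto 0).comp hTconv
  have hlimB : Tendsto (fun k : ℕ => br * (Vk k) * αTs) atTop
      (𝓝 (br * (Matrix.of fun (_ : Fin 1) (_ : Fin m) => (1 : ℝ)) * αTs)) := by
    have hc : Continuous fun M : Matrix (Fin 1) (Fin m) ℝ => br * M * αTs :=
      (continuous_const.matrix_mul continuous_id).matrix_mul continuous_const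
    exact (hc.tendsto _).comp hVconv
  have hlimeq : bl * (0 : Matrix (Fin m) (Fin m) ℝ) * αTs
      + br * (Matrix.of fun (_ : Fin 1) (_ : Fin m) => (1 : ℝ)) * αTs
      + br * bl2
      = (Matrix.of fun (_ : Fin 1) (_ : Fin n) => (1 : ℝ) - s) := by
    ext u j
    rw [Subsingleton.elim u 0]
    simp [Matrix.mul_apply, hbr, hbl2, Matrix.mul_zero, Matrix.zero_mul,
      ← Finset.sum_mul, mul_sub, sub_mul, Finset.mul_sum]
  have hmain : Tendsto (fun k : ℕ => trueGoalVec αTs αTg αpTs αpTg Tαs tαg k)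
      atTop (𝓝 (Matrix.of fun (_ : Fin 1) (_ : Fin n) => (1 : ℝ) - s)) := by
    rw [funext hfact, ← hlimeq]
    exact (hlimA.add hlimB).add tendsto_const_nhds
  refine ⟨hmain, ?_, ?_⟩
  · intro h
    have heq := tendsto_nhds_unique hmain h
    rcases Nat.eq_zero_or_pos n with hn | hn
    · subst hn; simp [hs]
    · have := congrFun (congrFun heq 0) ⟨0, hn⟩
      simp only [Matrix.of_apply] at this
      linarith
  · intro h
    have : (Matrix.of fun (_ : Fin 1) (_ : Fin n) => (1 : ℝ) - s)
        = (Matrix.of fun (_ : Fin 1) (_ : Fin n) => (1 : ℝ)) := by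
      ext u j; simp [h]
    rwa [this] at hmain

end Stmt16
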